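/- Let X, Y be real normed linear spaces and x ∈ X nonzero. A bounded linear operator T : X → Y preserves Birkhoff-James orthogonality at x (i.e., x ⊥_B y implies Tx ⊥_B Ty for all y) if and only if for every extreme support functional f ∈ Ext J(x), Tx ⊥_B Tz for all z ∈ ker f. -/

import Mathlib

open Set Metric

/-- Birkhoff-James orthogonality. -/
def BJOrth {X : Type*} [NormedAddCommGroup X] [NormedSpace ℝ X] (x y : X) : Prop :=
  ∀ t : ℝ, ‖x‖ ≤ ‖x + t • y‖

/-- The set of support functionals at `x`. -/
def suppFun {X : Type*} [NormedAddCommGroup X] [NormedSpace ℝ X] (x : X) :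
    Set (X →L[ℝ] ℝ) := {f | ‖f‖ = 1 ∧ f x = ‖x‖}

noncomputable instance {X : Type*} [NormedAddCommGroup X] [NormedSpace ℝ X] :
    LocallyConvexSpace ℝ (WeakDual ℝ X) :=
  WeakBilin.locallyConvexSpace (B := topDualPairing ℝ X)


/-- James-type lemma: if `x ⊥_B y` then there is a support functional at `x` vanishing at `y`. -/
lemma james_aux {X : Type*} [NormedAddCommGroup X] [NormedSpace ℝ X]
    (x : X) (hx : x ≠ 0) (y : X) (hxy : ∀ t : ℝ, ‖x‖ ≤ ‖x + t • y‖) :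
    ∃ f : X →L[ℝ] ℝ, ‖f‖ = 1 ∧ f x = ‖x‖ ∧ f y = 0 := by
  set S : Submodule ℝ X := ℝ ∙ y with hS
  haveI : IsClosed (S : Set X) := Submodule.closed_of_finiteDimensional S
  -- norm of the image of x in the quotient equals ‖x‖
  have hnormle : ∀ m : X, ‖(Submodule.Quotient.mk m : X ⧸ S)‖ ≤ ‖m‖ :=
    fun m => Submodule.Quotient.norm_mk_le S m
  have hxq : ‖(Submodule.Quotient.mk x : X ⧸ S)‖ = ‖x‖ := by
    refine le_antisymm (hnormle x) ?_
    refine le_of_forall_pos_le_add fun ε hε => ?_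
    obtain ⟨m, hm, hmlt⟩ := Submodule.Quotient.norm_mk_lt (Submodule.Quotient.mk x : X ⧸ S) hε
    have hms : m - x ∈ S := by
      exact (Submodule.Quotient.eq S).mp hm
    obtain ⟨t, ht⟩ := Submodule.mem_span_singleton.mp hms
    have : m = x + t • y := by rw [ht]; abel
    calc ‖x‖ ≤ ‖x + t • y‖ := hxy t
    _ = ‖m‖ := by rw [this]
    _ ≤ ‖(Submodule.Quotient.mk x : X ⧸ S)‖ + ε := hmlt.le
  have hxq0 : (Submodule.Quotient.mk x : X ⧸ S) ≠ 0 := by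
    intro h
    apply hx
    rw [← norm_eq_zero, ← hxq, h, norm_zero]
  obtain ⟨g, hg1, hgx⟩ := exists_dual_vector ℝ (Submodule.Quotient.mk x : X ⧸ S) (norm_ne_zero_iff.mpr hxq0)
  -- the quotient map as a continuous linear map
  set f : X →L[ℝ] ℝ :=
    LinearMap.mkContinuous ((g : (X ⧸ S) →ₗ[ℝ] ℝ).comp S.mkQ) 1 (by
      intro m
      simp only [LinearMap.comp_apply, Submodule.mkQ_apply, one_mul]
      calc ‖g (Submodule.Quotient.mk m)‖ ≤ ‖g‖ * ‖(Submodule.Quotient.mk m : X ⧸ S)‖ :=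
            g.le_opNorm _
      _ ≤ 1 * ‖m‖ := by rw [hg1]; exact by simpa using hnormle m
      _ = ‖m‖ := one_mul _) with hf
  have hfx : f x = ‖x‖ := by
    show g (Submodule.Quotient.mk x) = ‖x‖
    rw [hgx, hxq]; norm_num
  have hfy : f y = 0 := by
    show g (Submodule.Quotient.mk y) = 0
    have : (Submodule.Quotient.mk y : X ⧸ S) = 0 :=
      (Submodule.Quotient.mk_eq_zero S).mpr (Submodule.mem_span_singleton_self y)
    rw [this, map_zero]
  refine ⟨f, ?_, hfx, hfy⟩
  refine le_antisymm (LinearMap.mkContinuous_norm_le _ zero_le_one _) ?_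
  have hxpos : (0:ℝ) < ‖x‖ := norm_pos_iff.mpr hx
  have : ‖x‖ ≤ ‖f‖ * ‖x‖ := by
    calc ‖x‖ = f x := hfx.symm
    _ ≤ ‖f x‖ := le_abs_self _
    _ ≤ ‖f‖ * ‖x‖ := f.le_opNorm x
  exact le_of_mul_le_mul_right (by linarith) hxpos
lemma exists_extreme_nonneg {X : Type*} [NormedAddCommGroup X] [NormedSpace ℝ X]
    (x : X) (hx : x ≠ 0) (y : X) (f₀ : X →L[ℝ] ℝ) (hf₀ : f₀ ∈ suppFun x) (hf₀y : f₀ y = 0) :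
    ∃ φ ∈ Set.extremePoints ℝ (suppFun x), 0 ≤ φ y := by
  classical
  set S : Set (WeakDual ℝ X) :=
    (WeakDual.toStrongDual ⁻¹' closedBall 0 1) ∩ {f : WeakDual ℝ X | f x = ‖x‖} with hSdef
  have hxpos : (0:ℝ) < ‖x‖ := norm_pos_iff.mpr hx
  -- membership characterization
  have hmem : ∀ f : WeakDual ℝ X, f ∈ S ↔ (WeakDual.toStrongDual f) ∈ suppFun x := by
    intro f
    constructor
    · rintro ⟨h1, h2⟩
      have h1' : ‖WeakDual.toStrongDual f‖ ≤ 1 := by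
        simpa [mem_closedBall_zero_iff] using h1
      refine ⟨le_antisymm h1' ?_, h2⟩
      have : ‖x‖ ≤ ‖WeakDual.toStrongDual f‖ * ‖x‖ := by
        calc ‖x‖ = f x := h2.symm
        _ ≤ ‖f x‖ := le_abs_self _
        _ = ‖(WeakDual.toStrongDual f) x‖ := rfl
        _ ≤ ‖WeakDual.toStrongDual f‖ * ‖x‖ := (WeakDual.toStrongDual f).le_opNorm x
      exact le_of_mul_le_mul_right (by linarith) hxpos
    · rintro ⟨h1, h2⟩
      exact ⟨by simpa [mem_closedBall_zero_iff] using h1.le, h2⟩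
  have hclosed2 : IsClosed {f : WeakDual ℝ X | f x = ‖x‖} :=
    isClosed_eq (WeakDual.eval_continuous x) continuous_const
  have hcpt : IsCompact S := (WeakDual.isCompact_closedBall (𝕜 := ℝ) (E := X) 0 1).inter_right hclosed2
  have hne : S.Nonempty := ⟨StrongDual.toWeakDual f₀, (hmem _).mpr (by simpa using hf₀)⟩
  have hev : Continuous fun f : WeakDual ℝ X => f y := WeakDual.eval_continuous y
  obtain ⟨g, hgS, hgmax'⟩ := hcpt.exists_isMaxOn hne hev.continuousOn
  have hgmax : ∀ f ∈ S, f y ≤ g y := fun f hf => hgmax' hf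
  have hgy : 0 ≤ g y := by
    have := hgmax (StrongDual.toWeakDual f₀) ((hmem _).mpr (by simpa using hf₀))
    calc (0:ℝ) = f₀ y := hf₀y.symm
    _ ≤ g y := this
  set F : Set (WeakDual ℝ X) := S ∩ {f : WeakDual ℝ X | f y = g y} with hFdef
  have hFcpt : IsCompact F := hcpt.inter_right (isClosed_eq hev continuous_const)
  have hFne : F.Nonempty := ⟨g, hgS, rfl⟩
  obtain ⟨φ, hφ⟩ := hFcpt.extremePoints_nonempty hFne
  rw [mem_extremePoints] at hφ
  obtain ⟨⟨hφS, hφy⟩, hφext⟩ := hφ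
  have hφy' : φ y = g y := hφy
  -- φ is an extreme point of S
  have key : ∀ f₁ ∈ S, ∀ f₂ ∈ S, φ ∈ openSegment ℝ f₁ f₂ → f₁ = φ ∧ f₂ = φ := by
    intro f₁ h₁ f₂ h₂ hseg
    obtain ⟨a, b, ha, hb, hab, hcomb⟩ := hseg
    have hval : a * f₁ y + b * f₂ y = g y := by
      have := congrArg (fun f : WeakDual ℝ X => f y) hcomb
      refine Eq.trans ?_ (this.trans hφy'); rfl
    have e1 : f₁ y ≤ g y := hgmax f₁ h₁
    have e2 : f₂ y ≤ g y := hgmax f₂ h₂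
    have hf₁y : f₁ y = g y := by nlinarith
    have hf₂y : f₂ y = g y := by nlinarith
    exact hφext f₁ ⟨h₁, hf₁y⟩ f₂ ⟨h₂, hf₂y⟩ ⟨a, b, ha, hb, hab, hcomb⟩
  refine ⟨WeakDual.toStrongDual φ, ?_, by simpa using hgy.trans hφy'.ge⟩
  rw [mem_extremePoints]
  refine ⟨(hmem φ).mp hφS, ?_⟩
  intro f₁ h₁ f₂ h₂ hseg
  have h₁' : StrongDual.toWeakDual f₁ ∈ S := (hmem _).mpr (by simpa using h₁)
  have h₂' : StrongDual.toWeakDual f₂ ∈ S := (hmem _).mpr (by simpa using h₂)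
  have hseg' : φ ∈ openSegment ℝ (StrongDual.toWeakDual f₁) (StrongDual.toWeakDual f₂) := by
    obtain ⟨a, b, ha, hb, hab, hcomb⟩ := hseg
    exact ⟨a, b, ha, hb, hab, hcomb⟩
  obtain ⟨r1, r2⟩ := key _ h₁' _ h₂' hseg'
  constructor
  · exact congrArg WeakDual.toStrongDual r1
  · exact congrArg WeakDual.toStrongDual r2
/-- key computation lemma -/
lemma bj_key {Y : Type*} [NormedAddCommGroup Y] [NormedSpace ℝ Y]
    (u v : Y) (huv : BJOrth u v) (c t : ℝ) (h : 0 ≤ t * c) :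
    ‖u‖ ≤ ‖u + t • (v + c • u)‖ := by
  set s : ℝ := 1 + t * c with hs
  have hs1 : 1 ≤ s := by linarith
  have hs0 : s ≠ 0 := by intro h0; rw [h0] at hs1; linarith
  have hrw : u + t • (v + c • u) = s • (u + (t / s) • v) := by
    match_scalars
    · rw [hs]; ring
    · field_simp
  rw [hrw, norm_smul, Real.norm_of_nonneg (by linarith : (0:ℝ) ≤ s)]
  calc ‖u‖ ≤ ‖u + (t / s) • v‖ := huv (t / s)
  _ ≤ s * ‖u + (t / s) • v‖ := le_mul_of_one_le_left (norm_nonneg _) hs1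

theorem stmt_12 {X Y : Type*} [NormedAddCommGroup X] [NormedSpace ℝ X]
    [NormedAddCommGroup Y] [NormedSpace ℝ Y]
    (x : X) (hx : x ≠ 0) (T : X →L[ℝ] Y) :
    (∀ y : X, BJOrth x y → BJOrth (T x) (T y)) ↔
      ∀ f ∈ Set.extremePoints ℝ (suppFun x), ∀ z : X, f z = 0 → BJOrth (T x) (T z) := by
  constructor
  · intro H f hf z hz
    have hfs : f ∈ suppFun x := extremePoints_subset hf
    refine H z ?_
    intro t
    calc ‖x‖ = f x := hfs.2.symm
    _ = f (x + t • z) := by rw [map_add, map_smul, hz]; simp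
    _ ≤ ‖f (x + t • z)‖ := le_abs_self _
    _ ≤ ‖f‖ * ‖x + t • z‖ := f.le_opNorm _
    _ = ‖x + t • z‖ := by rw [hfs.1, one_mul]
  · intro H y hy
    obtain ⟨f₀, hf01, hf0x, hf0y⟩ := james_aux x hx y hy
    obtain ⟨φ₁, hφ₁ext, hφ₁y⟩ := exists_extreme_nonneg x hx y f₀ ⟨hf01, hf0x⟩ hf0y
    have hyneg : ∀ t : ℝ, ‖x‖ ≤ ‖x + t • (-y)‖ := by
      intro t
      have := hy (-t)
      simpa [neg_smul, smul_neg] using this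
    obtain ⟨φ₂, hφ₂ext, hφ₂y'⟩ := exists_extreme_nonneg x hx (-y) f₀ ⟨hf01, hf0x⟩ (by simp [hf0y])
    have hφ₂y : φ₂ y ≤ 0 := by simpa using hφ₂y'
    have hxpos : (0:ℝ) < ‖x‖ := norm_pos_iff.mpr hx
    intro t
    rcases le_or_gt 0 t with ht | ht
    · set c : ℝ := φ₁ y / ‖x‖ with hc
      have hc0 : 0 ≤ c := div_nonneg hφ₁y hxpos.le
      set z : X := y - c • x with hzdef
      have hφ₁z : φ₁ z = 0 := by
        have hφ₁x : φ₁ x = ‖x‖ := (extremePoints_subset hφ₁ext).2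
        rw [hzdef, map_sub, map_smul, hφ₁x]
        simp only [smul_eq_mul, hc]
        field_simp
        ring
      have hT : BJOrth (T x) (T z) := H φ₁ hφ₁ext z hφ₁z
      have hTy : T y = T z + c • T x := by
        rw [hzdef, map_sub, map_smul]; abel
      rw [hTy]
      exact bj_key (T x) (T z) hT c t (mul_nonneg ht hc0)
    · set c : ℝ := φ₂ y / ‖x‖ with hc
      have hc0 : c ≤ 0 := div_nonpos_of_nonpos_of_nonneg hφ₂y hxpos.le
      set z : X := y - c • x with hzdef
      have hφ₂z : φ₂ z = 0 := by
        have hφ₂x : φ₂ x = ‖x‖ := (extremePoints_subset hφ₂ext).2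
        rw [hzdef, map_sub, map_smul, hφ₂x]
        simp only [smul_eq_mul, hc]
        field_simp
        ring
      have hT : BJOrth (T x) (T z) := H φ₂ hφ₂ext z hφ₂z
      have hTy : T y = T z + c • T x := by
        rw [hzdef, map_sub, map_smul]; abel
      rw [hTy]
      exact bj_key (T x) (T z) hT c t (by nlinarith)
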